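/- arXiv:1206.5045 — 3 statements merged into one kernel-verified Lean document; each statement's English description precedes it below -/
import Mathlib

section
/- Let a₁, a₂ ∈ ℝ and z₁, z₂ ∈ ℂ with a₁² + |z₁|² = 1 = a₂² + |z₂|², and suppose 1/4 ≤ a₁, a₂ and |z₁|, |z₂| ≤ √15/4. If |z₁ - z₂| ≥ 15²·64·8·c₀ for some c₀ > 0, then |a₁z₂ - a₂z₁| ≥ 16·c₀. -/
set_option maxHeartbeats 1000000

/-- Quantitative separation estimate on the sphere
`{(a, z) ∈ ℝ × ℂ : a² + |z|² = 1}`: if both points lie in the band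
`1/4 ≤ a, |z| ≤ √15/4` and their `z`-coordinates are at least
`15²·64·8·c₀` apart, then `|a₁z₂ - a₂z₁| ≥ 16 c₀`. -/
theorem sphere_cross_term_separation
    (a₁ a₂ : ℝ) (z₁ z₂ : ℂ) (c₀ : ℝ) (hc₀ : 0 < c₀)
    (hn₁ : a₁ ^ 2 + ‖z₁‖ ^ 2 = 1)
    (hn₂ : a₂ ^ 2 + ‖z₂‖ ^ 2 = 1)
    (ha₁ : 1 / 4 ≤ a₁) (ha₂ : 1 / 4 ≤ a₂)
    (ha₁' : a₁ ≤ Real.sqrt 15 / 4) (ha₂' : a₂ ≤ Real.sqrt 15 / 4)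
    (hz₁l : 1 / 4 ≤ ‖z₁‖) (hz₂l : 1 / 4 ≤ ‖z₂‖)
    (hz₁ : ‖z₁‖ ≤ Real.sqrt 15 / 4)
    (hz₂ : ‖z₂‖ ≤ Real.sqrt 15 / 4)
    (hsep : 15 ^ 2 * 64 * 8 * c₀ ≤ ‖z₁ - z₂‖) :
    16 * c₀ ≤ ‖(a₁ : ℂ) * z₂ - (a₂ : ℂ) * z₁‖ := by
  have e1 : ‖z₁‖ ^ 2 = z₁.re ^ 2 + z₁.im ^ 2 := by
    rw [Complex.sq_norm, Complex.normSq_apply]; ring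
  have e2 : ‖z₂‖ ^ 2 = z₂.re ^ 2 + z₂.im ^ 2 := by
    rw [Complex.sq_norm, Complex.normSq_apply]; ring
  rw [e1] at hn₁; rw [e2] at hn₂
  have ew : ‖(a₁ : ℂ) * z₂ - (a₂ : ℂ) * z₁‖ ^ 2
      = (a₁ * z₂.re - a₂ * z₁.re) ^ 2 + (a₁ * z₂.im - a₂ * z₁.im) ^ 2 := by
    rw [Complex.sq_norm, Complex.normSq_apply]
    simp [Complex.sub_re, Complex.sub_im, Complex.mul_re, Complex.mul_im]
    ring
  have ez : ‖z₁ - z₂‖ ^ 2 = (z₁.re - z₂.re) ^ 2 + (z₁.im - z₂.im) ^ 2 := by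
    rw [Complex.sq_norm, Complex.normSq_apply]
    simp [Complex.sub_re, Complex.sub_im]
    ring
  have iden : (a₁ * z₂.re - a₂ * z₁.re) ^ 2 + (a₁ * z₂.im - a₂ * z₁.im) ^ 2
      = (a₁ - a₂) ^ 2 * (1 + a₁ * a₂)
        + a₁ * a₂ * ((z₁.re - z₂.re) ^ 2 + (z₁.im - z₂.im) ^ 2) := by
    linear_combination (a₁ - a₂) * a₁ * hn₂ - (a₁ - a₂) * a₂ * hn₁
  have key : ‖(a₁ : ℂ) * z₂ - (a₂ : ℂ) * z₁‖ ^ 2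
      ≥ (1 / 16) * ‖z₁ - z₂‖ ^ 2 := by
    rw [ew, ez, iden]
    nlinarith [sq_nonneg (a₁ - a₂), sq_nonneg (z₁.re - z₂.re), sq_nonneg (z₁.im - z₂.im),
      mul_le_mul ha₁ ha₂ (by norm_num) (le_trans (by norm_num) ha₁),
      mul_pos (lt_of_lt_of_le (by norm_num : (0:ℝ) < 1/4) ha₁)
        (lt_of_lt_of_le (by norm_num : (0:ℝ) < 1/4) ha₂)]
  have hnn := norm_nonneg ((a₁ : ℂ) * z₂ - (a₂ : ℂ) * z₁)
  have hsq : (15 ^ 2 * 64 * 8 * c₀) * (15 ^ 2 * 64 * 8 * c₀)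
      ≤ ‖z₁ - z₂‖ * ‖z₁ - z₂‖ :=
    mul_le_mul hsep hsep (by positivity) (norm_nonneg _)
  have h16 : (16 * c₀) ^ 2 ≤ ‖(a₁ : ℂ) * z₂ - (a₂ : ℂ) * z₁‖ ^ 2 := by
    nlinarith [key, hsq, hc₀]
  nlinarith [h16, hnn, hc₀]
end

section
/- Let v = (v₁, v₂, v₃) ∈ ℂ³ with |v₁| ≤ (3/2)c₀ and |v₂| > 1/4, and let a₁, a₂ ∈ ℝ, z₁, z₂ ∈ ℂ with aᵢ² + |zᵢ|² = 1, 1/4 ≤ aᵢ, |zᵢ| ≤ √15/4, and |a₁z₂ - a₂z₁| ≥ 16c₀. Then the first coordinate of h(a₁,z₁)⁻¹h(a₂,z₂)·v has absolute value greater than (5/2)c₀, where h(a,z) is the 3×3 matrix with first row (a, z, 0), second row (-z̄, a, 0), third row (0, 0, 1). -/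
open Matrix

/-- The rotation-like matrix `h(a, z) ∈ SU(3)` used in Example 8.1. -/
noncomputable def rotMat (a : ℝ) (z : ℂ) : Matrix (Fin 3) (Fin 3) ℂ :=
  !![(a : ℂ), z, 0; -(starRingEnd ℂ z), (a : ℂ), 0; 0, 0, 1]

lemma rotMat_inv (a : ℝ) (z : ℂ) (h : a ^ 2 + ‖z‖ ^ 2 = 1) :
    (rotMat a z)⁻¹ = !![(a : ℂ), -z, 0; starRingEnd ℂ z, (a : ℂ), 0; 0, 0, 1] := by
  apply inv_eq_right_inv
  have hz : z * starRingEnd ℂ z = 1 - (a : ℂ) ^ 2 := by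
    rw [Complex.mul_conj, Complex.normSq_eq_norm_sq]
    have : (‖z‖ ^ 2 : ℝ) = 1 - a ^ 2 := by linarith
    rw [this]; push_cast; ring
  have hz' : starRingEnd ℂ z * z = 1 - (a : ℂ) ^ 2 := by rw [mul_comm]; exact hz
  ext i j
  fin_cases i <;> fin_cases j <;>
    simp [rotMat, Matrix.mul_apply, Fin.sum_univ_three, Matrix.one_apply, hz, hz'] <;>
    ring

/-- Disjointness estimate for rotated sets: if `|v₁| ≤ (3/2)c₀`, `|v₂| > 1/4`
and `|a₁z₂ - a₂z₁| ≥ 16 c₀`, then the first coordinate of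
`h(a₁,z₁)⁻¹ h(a₂,z₂) · v` has absolute value greater than `(5/2) c₀`. -/
theorem rotated_first_coordinate_large
    (v : Fin 3 → ℂ) (c₀ : ℝ) (hc₀ : 0 < c₀)
    (hv₁ : ‖v 0‖ ≤ 3 / 2 * c₀)
    (hv₂ : 1 / 4 < ‖v 1‖)
    (a₁ a₂ : ℝ) (z₁ z₂ : ℂ)
    (hn₁ : a₁ ^ 2 + ‖z₁‖ ^ 2 = 1)
    (hn₂ : a₂ ^ 2 + ‖z₂‖ ^ 2 = 1)
    (ha₁ : 1 / 4 ≤ a₁) (ha₂ : 1 / 4 ≤ a₂)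
    (hz₁ : ‖z₁‖ ≤ Real.sqrt 15 / 4)
    (hz₂ : ‖z₂‖ ≤ Real.sqrt 15 / 4)
    (hcross : 16 * c₀ ≤ ‖(a₁ : ℂ) * z₂ - (a₂ : ℂ) * z₁‖) :
    5 / 2 * c₀ <
      ‖(((rotMat a₁ z₁)⁻¹ * rotMat a₂ z₂) *ᵥ v) 0‖ := by
  set A : ℂ := (a₁ : ℂ) * a₂ + z₁ * starRingEnd ℂ z₂ with hA
  set B : ℂ := (a₁ : ℂ) * z₂ - (a₂ : ℂ) * z₁ with hB
  have key : (((rotMat a₁ z₁)⁻¹ * rotMat a₂ z₂) *ᵥ v) 0 = A * v 0 + B * v 1 := by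
    rw [rotMat_inv a₁ z₁ hn₁]
    simp [rotMat, Matrix.mulVec, Matrix.mul_apply, dotProduct, Fin.sum_univ_three, hA, hB]
    exact Or.inl (by ring)
  -- Cauchy–Schwarz bound |A| ≤ 1
  have habsA : ‖A‖ ≤ 1 := by
    have h1 : ‖A‖ ≤ a₁ * a₂ + ‖z₁‖ * ‖z₂‖ := by
      calc ‖A‖ ≤ ‖(a₁ : ℂ) * a₂‖ +
            ‖z₁ * starRingEnd ℂ z₂‖ := norm_add_le _ _
        _ = a₁ * a₂ + ‖z₁‖ * ‖z₂‖ := by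
            rw [norm_mul, norm_mul, Complex.norm_conj]
            simp [Complex.norm_real, abs_of_nonneg (by linarith : (0:ℝ) ≤ a₁),
              abs_of_nonneg (by linarith : (0:ℝ) ≤ a₂)]
    have hcs : a₁ * a₂ + ‖z₁‖ * ‖z₂‖ ≤ 1 := by
      nlinarith [norm_nonneg z₁, norm_nonneg z₂,
        sq_nonneg (a₁ * ‖z₂‖ - a₂ * ‖z₁‖),
        sq_nonneg (a₁ * a₂ + ‖z₁‖ * ‖z₂‖)]
    linarith
  have hBv : 4 * c₀ < ‖B * v 1‖ := by
    rw [norm_mul]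
    have h16 : (0:ℝ) < 16 * c₀ := by linarith
    calc 4 * c₀ = 16 * c₀ * (1/4) := by ring
      _ < ‖B‖ * ‖v 1‖ := by
          apply mul_lt_mul' hcross hv₂ (by norm_num) (by linarith)
  have hAv : ‖A * v 0‖ ≤ 3 / 2 * c₀ := by
    rw [norm_mul]
    calc ‖A‖ * ‖v 0‖ ≤ 1 * (3 / 2 * c₀) := by
          apply mul_le_mul habsA hv₁ (norm_nonneg _) (by norm_num)
      _ = 3 / 2 * c₀ := by ring
  have htri : ‖B * v 1‖ - ‖A * v 0‖ ≤
      ‖A * v 0 + B * v 1‖ := by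
    have h := norm_sub_norm_le (B * v 1) (-(A * v 0))
    rw [sub_neg_eq_add, norm_neg, add_comm] at h
    simpa using h
  rw [key]
  linarith
end

section
/- Let π be a unitary representation of a group G on a Hilbert space, K a compact subgroup with normalized Haar measure, and Ξ : G → (0,1] a function with Ξ(h) < 1 for some fixed h ∈ G, such that |⟨π(g)w, w⟩| ≤ Ξ(g) for all K-invariant unit vectors w. Set κ = √(2(1-Ξ(h))) / (√(2(1-Ξ(h))) + 3). Then for every unit vector ν, max over s ∈ K ∪ {h} of ‖π(s)ν - ν‖ ≥ κ. -/
open scoped InnerProductSpace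

set_option maxHeartbeats 1000000 in
/-- Kazhdan constant estimate: if all diagonal matrix coefficients of a unitary
representation `π` at `K`-invariant unit vectors are bounded by `Ξ`, and
`Ξ h < 1`, then every unit vector is moved by at least
`κ = √(2(1-Ξ h)) / (√(2(1-Ξ h)) + 3)` by some element of `K ∪ {h}`. -/
theorem kazhdan_constant_estimate
    {G : Type*} [Group G] [TopologicalSpace G] [IsTopologicalGroup G]
    {H : Type*} [NormedAddCommGroup H] [InnerProductSpace ℂ H] [CompleteSpace H]
    (π : G →* (H ≃ₗᵢ[ℂ] H))
    (hcont : ∀ v : H, Continuous fun g : G => π g v)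
    (K : Subgroup G) (hK : IsCompact (K : Set G))
    (h : G)
    (Ξ : G → ℝ) (hΞpos : ∀ g, 0 < Ξ g) (hΞle : ∀ g, Ξ g ≤ 1) (hΞh : Ξ h < 1)
    (hbound : ∀ w : H, ‖w‖ = 1 → (∀ k ∈ K, π k w = w) →
      ∀ g : G, ‖⟪π g w, w⟫_ℂ‖ ≤ Ξ g) :
    ∀ ν : H, ‖ν‖ = 1 →
      ∃ s ∈ insert h (K : Set G),
        Real.sqrt (2 * (1 - Ξ h)) / (Real.sqrt (2 * (1 - Ξ h)) + 3)
          ≤ ‖π s ν - ν‖ := by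
  intro ν hν
  set κr := Real.sqrt (2 * (1 - Ξ h)) with hκr
  set κ := κr / (κr + 3) with hκ
  have hκr0 : 0 < κr := Real.sqrt_pos.2 (by linarith)
  have hκ0 : 0 < κ := div_pos hκr0 (by linarith)
  have hκ1 : κ < 1 := (div_lt_one (by linarith)).2 (by linarith)
  by_contra hcon
  push_neg at hcon
  have hmoveh : ‖π h ν - ν‖ < κ := hcon h (Set.mem_insert _ _)
  have hmoveK : ∀ k ∈ K, ‖π k ν - ν‖ < κ := fun k hk =>
    hcon k (Set.mem_insert_of_mem _ hk)
  letI : InnerProductSpace ℝ H := InnerProductSpace.complexToReal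
  set S : Set H := (fun k : G => π k ν) '' (K : Set G) with hS
  set C : Set H := closure (convexHull ℝ S) with hC
  have hCconv : Convex ℝ C := (convex_convexHull ℝ S).closure
  have hCclosed : IsClosed C := isClosed_closure
  have hCne : C.Nonempty := ⟨ν, subset_closure (subset_convexHull ℝ S
    ⟨1, K.one_mem, by simp⟩)⟩
  have hCball : C ⊆ Metric.closedBall ν κ := by
    apply closure_minimal _ Metric.isClosed_closedBall
    apply convexHull_min _ (convex_closedBall ν κ)
    rintro x ⟨k, hk, rfl⟩
    simpa [Metric.mem_closedBall, dist_eq_norm] using (hmoveK k hk).le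
  have hmaps : ∀ k ∈ K, ∀ x ∈ C, π k x ∈ C := by
    intro k hk
    have hlin : Convex ℝ ((((π k).toLinearEquiv.toLinearMap.restrictScalars ℝ)) ⁻¹'
        (convexHull ℝ S)) := (convex_convexHull ℝ S).linear_preimage _
    have hhull : convexHull ℝ S ⊆ (fun x => π k x) ⁻¹' (convexHull ℝ S) := by
      apply convexHull_min _ hlin
      rintro x ⟨k', hk', rfl⟩
      exact subset_convexHull ℝ S ⟨k * k', K.mul_mem hk hk', by simp [map_mul]⟩
    intro x hx
    have himg : (fun x : H => π k x) '' C ⊆ C := by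
      calc (fun x : H => π k x) '' closure (convexHull ℝ S)
          ⊆ closure ((fun x : H => π k x) '' (convexHull ℝ S)) :=
            image_closure_subset_closure_image (π k).continuous
        _ ⊆ closure (convexHull ℝ S) := closure_mono (Set.image_subset_iff.2 hhull)
    exact himg ⟨x, hx, rfl⟩
  obtain ⟨m, hmC, hmmin⟩ := exists_norm_eq_iInf_of_complete_convex hCne
    hCclosed.isComplete hCconv 0
  have hδle : ∀ x ∈ C, ‖m‖ ≤ ‖x‖ := by
    intro x hx
    have h1 : (⨅ w : C, ‖(0:H) - w‖) ≤ ‖(0:H) - x‖ :=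
      ciInf_le ⟨0, Set.forall_mem_range.2 fun _ => norm_nonneg _⟩ (⟨x, hx⟩ : C)
    have h2 : ‖(0:H) - m‖ = ⨅ w : C, ‖(0:H) - w‖ := hmmin
    simp only [zero_sub, norm_neg] at h1 h2
    rw [h2]; exact h1
  have huniq : ∀ x ∈ C, ‖x‖ = ‖m‖ → x = m := by
    intro x hx hxm
    have hmid : (1/2 : ℝ) • x + (1/2 : ℝ) • m ∈ C :=
      hCconv hx hmC (by norm_num) (by norm_num) (by norm_num)
    have h1 : ‖m‖ ≤ ‖(1/2 : ℝ) • x + (1/2 : ℝ) • m‖ := hδle _ hmid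
    have hpar : ‖x + m‖ ^ 2 + ‖x - m‖ ^ 2 = 2 * (‖x‖ ^ 2 + ‖m‖ ^ 2) := by
      have := parallelogram_law_with_norm ℝ x m
      nlinarith [this]
    have h2 : ‖(1/2 : ℝ) • x + (1/2 : ℝ) • m‖ = (1/2) * ‖x + m‖ := by
      rw [← smul_add, norm_smul]; simp
    have hsq : ‖x - m‖ ^ 2 ≤ 0 := by
      nlinarith [norm_nonneg m, norm_nonneg (x + m)]
    have hzero : ‖x - m‖ = 0 := by
      nlinarith [norm_nonneg (x - m), sq_nonneg ‖x - m‖]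
    exact sub_eq_zero.1 (norm_eq_zero.1 hzero)
  have hminv : ∀ k ∈ K, π k m = m := by
    intro k hk
    exact huniq _ (hmaps k hk m hmC) ((π k).norm_map m)
  have hmν : ‖m - ν‖ ≤ κ := by
    simpa [Metric.mem_closedBall, dist_eq_norm] using hCball hmC
  have hmlb : 1 - κ ≤ ‖m‖ := by
    have h3 : ‖ν - m‖ ≤ κ := by rwa [norm_sub_rev] at hmν
    have h4 := norm_sub_norm_le ν m
    rw [hν] at h4
    linarith
  have hm0 : 0 < ‖m‖ := lt_of_lt_of_le (by linarith) hmlb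
  set w : H := ‖m‖⁻¹ • m with hw
  have hsmul : ∀ g : G, π g w = ‖m‖⁻¹ • π g m := by
    intro g
    rw [hw, ← Complex.coe_smul, map_smul, Complex.coe_smul]
  have hwnorm : ‖w‖ = 1 := by
    rw [hw, norm_smul, norm_inv, norm_norm, inv_mul_cancel₀ hm0.ne']
  have hwinv : ∀ k ∈ K, π k w = w := by
    intro k hk
    rw [hsmul k, hminv k hk]
  have hb := hbound w hwnorm hwinv h
  have hre : (⟪π h w, w⟫_ℂ).re ≤ Ξ h := (Complex.re_le_norm _).trans hb
  have hnormw : ‖π h w - w‖ ^ 2 = 2 - 2 * (⟪π h w, w⟫_ℂ).re := by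
    have hns := norm_sub_sq (𝕜 := ℂ) (E := H) (π h w) w
    rw [(π h).norm_map, hwnorm] at hns
    simp only [RCLike.re_to_complex] at hns
    linarith
  have hge : κr ≤ ‖π h w - w‖ := by
    have h1 : 2 * (1 - Ξ h) ≤ ‖π h w - w‖ ^ 2 := by rw [hnormw]; linarith
    calc κr ≤ Real.sqrt (‖π h w - w‖ ^ 2) := Real.sqrt_le_sqrt h1
      _ = ‖π h w - w‖ := Real.sqrt_sq (norm_nonneg _)
  have hmw : π h m - m = ‖m‖ • (π h w - w) := by
    have e1 : ‖m‖ • w = m := by rw [hw, smul_inv_smul₀ hm0.ne']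
    have e2 : ‖m‖ • π h w = π h m := by rw [hsmul h, smul_inv_smul₀ hm0.ne']
    rw [smul_sub, e1, e2]
  have hbig : κr * ‖m‖ ≤ ‖π h m - m‖ := by
    rw [hmw, norm_smul, Real.norm_eq_abs, abs_of_pos hm0]
    nlinarith
  have hsplit : π h m - m = (π h m - π h ν) + (π h ν - ν) + (ν - m) := by abel
  have h1 : ‖π h m - π h ν‖ = ‖m - ν‖ := by
    rw [← map_sub]; exact (π h).norm_map _
  have hsmall : ‖π h m - m‖ < 3 * κ := by
    calc ‖π h m - m‖ ≤ ‖π h m - π h ν‖ + ‖π h ν - ν‖ + ‖ν - m‖ := by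
          rw [hsplit]; exact (norm_add_le _ _).trans (by gcongr <;> exact norm_add_le _ _)
      _ < κ + κ + κ := by
          rw [h1]
          have h3 : ‖ν - m‖ ≤ κ := by rwa [norm_sub_rev] at hmν
          linarith
      _ = 3 * κ := by ring
  have hkey : κr * (1 - κ) = 3 * κ := by
    rw [hκ]; field_simp; ring
  nlinarith [hbig, hsmall, hmlb, hκr0.le]
end
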